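/- With φ as above written as φ = X(1 + Σ_{k≥1} A_k X^k), the coefficient A_k satisfies A_k = −(1/2) a_k + A_k*, where A_k* belongs to the polynomial ideal generated by a_1, ..., a_{k−1}. -/

import Mathlib

section Helpers
open Real Filter Asymptotics MvPolynomial


lemma pow_O {p q : ℕ} (h : p ≤ q) : (fun x : ℝ => x ^ q) =O[nhds 0] fun x => x ^ p := by
  apply IsBigO.of_bound 1
  filter_upwards [Metric.ball_mem_nhds (0:ℝ) one_pos] with x hx
  simp only [Metric.mem_ball, Real.dist_eq, sub_zero] at hx
  simp only [norm_pow, Real.norm_eq_abs, one_mul]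
  exact pow_le_pow_of_le_one (abs_nonneg x) hx.le h

lemma const_of_littleO {d : ℝ} {p : ℕ}
    (h : (fun x : ℝ => d * x ^ p) =o[nhds 0] fun x => x ^ p) : d = 0 := by
  have h2 := (h.mono (nhdsWithin_le_nhds : nhdsWithin (0:ℝ) {(0:ℝ)}ᶜ ≤ nhds 0)).tendsto_div_nhds_zero
  have h3 : Tendsto (fun _ : ℝ => d) (nhdsWithin 0 {(0:ℝ)}ᶜ) (nhds 0) := by
    apply h2.congr'
    filter_upwards [self_mem_nhdsWithin] with x hx
    have : x ≠ 0 := hx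
    field_simp
  exact tendsto_nhds_unique tendsto_const_nhds h3

lemma mem_span_of_eval {m : ℕ} (s : Set (Fin m)) (P : MvPolynomial (Fin m) ℝ)
    (h : ∀ a : Fin m → ℝ, (∀ i ∈ s, a i = 0) → MvPolynomial.eval a P = 0) :
    P ∈ Ideal.span ((fun i : Fin m => (MvPolynomial.X i : MvPolynomial (Fin m) ℝ)) '' s) := by
  classical
  set g : MvPolynomial (Fin m) ℝ →ₐ[ℝ] MvPolynomial (Fin m) ℝ :=
    aeval (fun i => if i ∈ s then 0 else X i) with hg
  have hgP : g P = 0 := by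
    apply MvPolynomial.funext
    intro a
    have : eval a (g P) = eval (fun i => if i ∈ s then 0 else a i) P := by
      rw [hg]
      simp only [aeval_def, eval, eval₂Hom_eq_bind₂]
      rw [eval₂_comp_left (eval₂Hom (RingHom.id ℝ) a)]
      · congr 1
        · ext r; simp
        · funext i; by_cases hi : i ∈ s <;> simp [hi]
    rw [this, h _ fun i hi => by simp [hi], map_zero]
  have hπ : ∀ Q : MvPolynomial (Fin m) ℝ,
      (Ideal.Quotient.mkₐ ℝ (Ideal.span ((fun i : Fin m => (X i : MvPolynomial (Fin m) ℝ)) '' s))).comp g Q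
        = Ideal.Quotient.mkₐ ℝ _ Q := by
    intro Q
    have : (Ideal.Quotient.mkₐ ℝ (Ideal.span ((fun i : Fin m => (X i : MvPolynomial (Fin m) ℝ)) '' s))).comp g
        = Ideal.Quotient.mkₐ ℝ _ := by
      apply MvPolynomial.algHom_ext
      intro i
      by_cases hi : i ∈ s
      · simp only [AlgHom.comp_apply, hg, aeval_X, hi, if_true, map_zero]
        symm
        rw [Ideal.Quotient.mkₐ_eq_mk, Ideal.Quotient.eq_zero_iff_mem]
        exact Ideal.subset_span ⟨i, hi, rfl⟩
      · simp [hg, hi]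
    rw [this]
  have := hπ P
  rw [AlgHom.comp_apply, hgP, map_zero] at this
  rw [Ideal.Quotient.mkₐ_eq_mk, eq_comm, Ideal.Quotient.eq_zero_iff_mem] at this
  exact this

end Helpers


open Real Filter Asymptotics

/-- With `φ = X(1 + Σ_{k≥1} A_k X^k)` the local inverse of
`x ↦ x(1 + a₁x + ⋯ + a_m x^m)^{1/2}` (here `m = n − 2`, and `a_j` corresponds to the
variable `X ⟨j-1⟩`), each coefficient satisfies `A_k = −(1/2) a_k + A_k*` where `A_k*`
lies in the polynomial ideal generated by `a₁, …, a_{k−1}`. -/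
theorem stmt4 (m : ℕ) (A : ℕ → MvPolynomial (Fin m) ℝ)
    (hA : ∀ a : Fin m → ℝ, ∃ ε > (0 : ℝ), ∃ φ : ℝ → ℝ,
      (∀ x : ℝ, |x| < ε →
        φ (x * Real.sqrt (1 + ∑ i : Fin m, a i * x ^ ((i : ℕ) + 1))) = x) ∧
      ∀ K : ℕ,
        (fun X : ℝ => φ X -
            X * (1 + ∑ k ∈ Finset.Icc 1 K, (MvPolynomial.eval a (A k)) * X ^ k))
          =o[nhds 0] fun X : ℝ => X ^ (K + 1)) :
    ∀ (k : ℕ) (h1 : 1 ≤ k) (h2 : k ≤ m),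
      A k + MvPolynomial.C (1 / 2 : ℝ) * MvPolynomial.X (⟨k - 1, by omega⟩ : Fin m) ∈
        Ideal.span ((fun i : Fin m => (MvPolynomial.X i : MvPolynomial (Fin m) ℝ)) ''
          {i : Fin m | (i : ℕ) + 1 < k}) := by
  intro k h1 h2
  apply mem_span_of_eval
  intro a ha
  simp only [Set.mem_setOf_eq] at ha
  obtain ⟨ε, hε, φ, hinv, hasy⟩ := hA a
  set α : ℝ := a ⟨k - 1, by omega⟩ with hα
  set c : ℕ → ℝ := fun j => MvPolynomial.eval a (A j) with hc
  set S : ℝ → ℝ := fun x => ∑ i : Fin m, a i * x ^ ((i : ℕ) + 1) with hS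
  set F : ℝ → ℝ := fun x => x * Real.sqrt (1 + S x) with hF
  -- continuity facts
  have hScont : Continuous S := by
    apply continuous_finset_sum
    intro i _
    exact (continuous_const.mul (continuous_pow _))
  have hS0 : S 0 = 0 := by simp [hS]
  have hStend : Tendsto S (nhds 0) (nhds 0) := by
    have := (hScont.continuousAt (x := (0:ℝ))).tendsto
    rwa [hS0] at this
  have hrtend : Tendsto (fun x => Real.sqrt (1 + S x)) (nhds 0) (nhds 1) := by
    have h1' : Tendsto (fun x => 1 + S x) (nhds 0) (nhds 1) := by
      simpa using tendsto_const_nhds.add hStend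
    have := (Real.continuous_sqrt.continuousAt (x := (1:ℝ))).tendsto.comp h1'
    simpa [Function.comp_def] using this
  have hFtend : Tendsto F (nhds 0) (nhds 0) := by
    have := Filter.Tendsto.mul (tendsto_id (x := nhds (0:ℝ))) hrtend
    simpa using this
  -- Big-O facts
  have hSO : S =O[nhds 0] fun x => x ^ k := by
    rw [hS]
    apply Asymptotics.IsBigO.fun_sum
    intro i _
    by_cases hik : (i : ℕ) + 1 < k
    · have : (fun x : ℝ => a i * x ^ ((i:ℕ)+1)) = fun _ => 0 := by
        funext x; simp [ha i hik]
      rw [this]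
      exact isBigO_zero _ _
    · exact ((pow_O (by omega : k ≤ (i:ℕ)+1)).const_mul_left (a i))
  have hFO : F =O[nhds 0] fun x : ℝ => x := by
    have hr1 : (fun x => Real.sqrt (1 + S x)) =O[nhds 0] (fun _ : ℝ => (1:ℝ)) :=
      hrtend.isBigO_one ℝ
    have := (isBigO_refl (fun x : ℝ => x) (nhds 0)).mul hr1
    simpa [hF] using this
  -- key1 : expansion of F to order k+1
  have hSsmall : ∀ᶠ x in nhds (0:ℝ), |S x| < 1/2 := by
    have := hStend (Metric.ball_mem_nhds (0:ℝ) one_half_pos)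
    filter_upwards [this] with x hx
    simpa [Real.dist_eq] using hx
  have hu : Tendsto (fun x => 1/(Real.sqrt (1 + S x) + 1) - 1/2) (nhds 0) (nhds 0) := by
    have h2 : Tendsto (fun x => Real.sqrt (1 + S x) + 1) (nhds 0) (nhds 2) := by
      have := hrtend.add (tendsto_const_nhds (x := (1:ℝ)))
      norm_num at this
      exact this
    have h3 : Tendsto (fun x => 1/(Real.sqrt (1 + S x) + 1)) (nhds 0) (nhds (1/2)) :=
      Filter.Tendsto.div (tendsto_const_nhds (x := (1:ℝ))) h2 (by norm_num)
    have := h3.sub (tendsto_const_nhds (x := (1/2:ℝ)))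
    simpa using this
  have huo : (fun x => 1/(Real.sqrt (1 + S x) + 1) - 1/2) =o[nhds 0] (fun _ : ℝ => (1:ℝ)) :=
    Asymptotics.isLittleO_one_iff ℝ |>.2 hu
  have hTO : (fun x => S x - α * x ^ k) =O[nhds 0] fun x => x ^ (k+1) := by
    have hkey : ∀ x : ℝ, S x - α * x ^ k =
        ∑ i ∈ Finset.univ.erase (⟨k - 1, by omega⟩ : Fin m), a i * x ^ ((i:ℕ)+1) := by
      intro x
      simp only [hS]
      rw [← Finset.sum_erase_add Finset.univ _
        (Finset.mem_univ (⟨k - 1, by omega⟩ : Fin m))]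
      have hval : ((⟨k - 1, by omega⟩ : Fin m) : ℕ) + 1 = k := by simp; omega
      rw [hval, hα]
      ring
    have : (fun x : ℝ => S x - α * x ^ k) =
        fun x => ∑ i ∈ Finset.univ.erase (⟨k - 1, by omega⟩ : Fin m), a i * x ^ ((i:ℕ)+1) :=
      funext hkey
    rw [this]
    apply Asymptotics.IsBigO.fun_sum
    intro i hi
    rw [Finset.mem_erase] at hi
    by_cases hik : (i : ℕ) + 1 < k
    · have : (fun x : ℝ => a i * x ^ ((i:ℕ)+1)) = fun _ => 0 := by
        funext x; simp [ha i hik]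
      rw [this]
      exact isBigO_zero _ _
    · have hne : (i : ℕ) + 1 ≠ k := by
        intro hval
        apply hi.1
        apply Fin.ext
        simp
        omega
      exact ((pow_O (by omega : k + 1 ≤ (i:ℕ)+1)).const_mul_left (a i))
  have key1 : (fun x => F x - x - α/2 * x^(k+1)) =o[nhds 0] fun x : ℝ => x^(k+1) := by
    have piece1 : (fun x => (x * S x) * (1/(Real.sqrt (1 + S x) + 1) - 1/2))
        =o[nhds 0] fun x : ℝ => x^(k+1) := by
      have hxS : (fun x => x * S x) =O[nhds 0] fun x : ℝ => x^(k+1) := by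
        have := (isBigO_refl (fun x : ℝ => x) (nhds 0)).mul hSO
        have heq : (fun x : ℝ => x * x ^ k) = fun x : ℝ => x ^ (k+1) :=
          funext fun x => (pow_succ' x k).symm
        rwa [heq] at this
      have := hxS.mul_isLittleO huo
      simpa using this
    have piece2 : (fun x => x/2 * (S x - α * x ^ k)) =o[nhds 0] fun x : ℝ => x^(k+1) := by
      have hx2 : (fun x : ℝ => x/2) =O[nhds 0] fun x : ℝ => x := by
        have := (isBigO_refl (fun x : ℝ => x) (nhds 0)).const_mul_left (1/2)
        simpa [div_eq_mul_inv, mul_comm] using this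
      have hbig := hx2.mul hTO
      have heq : (fun x : ℝ => x * x ^ (k+1)) = fun x : ℝ => x ^ (k+2) :=
        funext fun x => (pow_succ' x (k+1)).symm
      rw [heq] at hbig
      exact hbig.trans_isLittleO (isLittleO_pow_pow (by omega))
    have hsum := piece1.add piece2
    apply hsum.congr' _ EventuallyEq.rfl
    filter_upwards [hSsmall] with x hx
    have h0 : (0:ℝ) ≤ 1 + S x := by
      have := abs_lt.1 hx
      linarith [this.1]
    set r := Real.sqrt (1 + S x) with hrdef
    have hr2 : r ^ 2 = 1 + S x := Real.sq_sqrt h0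
    have hrn : 0 ≤ r := Real.sqrt_nonneg _
    have hrp : r + 1 ≠ 0 := by positivity
    have hFx : F x = x * r := rfl
    have hSx : S x = r ^ 2 - 1 := by linarith
    rw [hFx, hSx]
    field_simp
    ring
  have hFsub : (fun x => F x - x) =O[nhds 0] fun x : ℝ => x ^ (k+1) := by
    have := key1.isBigO.add ((isBigO_refl (fun x : ℝ => x ^ (k+1)) (nhds 0)).const_mul_left (α/2))
    have heq : (fun x => F x - x - α/2 * x^(k+1) + α/2 * x^(k+1)) = fun x => F x - x :=
      funext fun x => by ring
    rwa [heq] at this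
  have key2 : ∀ j, 1 ≤ j →
      (fun x => (F x)^(j+1) - x^(j+1)) =o[nhds 0] fun x : ℝ => x^(k+1) := by
    intro j hj
    have hgeom : (fun x => (F x)^(j+1) - x^(j+1)) =
        fun x => (∑ i ∈ Finset.range (j+1), (F x)^i * x^(j+1-1-i)) * (F x - x) :=
      funext fun x => (geom_sum₂_mul (F x) x (j+1)).symm
    have hsumO : (fun x => ∑ i ∈ Finset.range (j+1), (F x)^i * x^(j+1-1-i))
        =O[nhds 0] fun x : ℝ => x^j := by
      apply Asymptotics.IsBigO.fun_sum
      intro i hi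
      rw [Finset.mem_range] at hi
      have := (hFO.pow i).mul (isBigO_refl (fun x : ℝ => x^(j+1-1-i)) (nhds 0))
      have heq : (fun x : ℝ => x^i * x^(j+1-1-i)) = fun x : ℝ => x^j := by
        funext x
        rw [← pow_add]
        congr 1
        omega
      rwa [heq] at this
    rw [hgeom]
    have hbig := hsumO.mul hFsub
    have heq : (fun x : ℝ => x^j * x^(k+1)) = fun x : ℝ => x^(j+k+1) :=
      funext fun x => by rw [← pow_add, Nat.add_assoc]
    rw [heq] at hbig
    exact hbig.trans_isLittleO (isLittleO_pow_pow (by omega))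
  -- composition step
  have hcomp := (hasy k).comp_tendsto hFtend
  simp only [Function.comp_def] at hcomp
  have hFpow : (fun x => (F x)^(k+1)) =O[nhds 0] fun x : ℝ => x^(k+1) := by
    have := hFO.pow (k+1)
    simpa using this
  have H1' : (fun x => φ (F x) - F x * (1 + ∑ j ∈ Finset.Icc 1 k, c j * (F x)^j))
      =o[nhds 0] fun x : ℝ => x^(k+1) := hcomp.trans_isBigO hFpow
  have hev : ∀ᶠ x in nhds (0:ℝ), φ (F x) = x := by
    filter_upwards [Metric.ball_mem_nhds (0:ℝ) hε] with x hx
    have : |x| < ε := by simpa [Real.dist_eq] using hx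
    exact hinv x this
  have H1 : (fun x => x - F x * (1 + ∑ j ∈ Finset.Icc 1 k, c j * (F x)^j))
      =o[nhds 0] fun x : ℝ => x^(k+1) := by
    apply H1'.congr' _ EventuallyEq.rfl
    filter_upwards [hev] with x hx
    rw [hx]
  -- H2 : Taylor expansion of the candidate polynomial composed with F
  have H2 : (fun x => F x * (1 + ∑ j ∈ Finset.Icc 1 k, c j * (F x)^j)
        - (x + ((∑ j ∈ Finset.Icc 1 k, c j * x^(j+1)) + α/2 * x^(k+1))))
      =o[nhds 0] fun x : ℝ => x^(k+1) := by
    have hterms : (fun x => (F x - x - α/2 * x^(k+1))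
          + ∑ j ∈ Finset.Icc 1 k, c j * ((F x)^(j+1) - x^(j+1)))
        =o[nhds 0] fun x : ℝ => x^(k+1) := by
      apply key1.add
      apply Asymptotics.IsLittleO.fun_sum
      intro j hj
      exact (key2 j (Finset.mem_Icc.1 hj).1).const_mul_left (c j)
    have heq : (fun x => (F x - x - α/2 * x^(k+1))
          + ∑ j ∈ Finset.Icc 1 k, c j * ((F x)^(j+1) - x^(j+1)))
        = fun x => F x * (1 + ∑ j ∈ Finset.Icc 1 k, c j * (F x)^j)
          - (x + ((∑ j ∈ Finset.Icc 1 k, c j * x^(j+1)) + α/2 * x^(k+1))) := by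
      funext x
      have e1 : ∑ j ∈ Finset.Icc 1 k, c j * ((F x)^(j+1) - x^(j+1))
          = (∑ j ∈ Finset.Icc 1 k, c j * (F x)^(j+1))
            - ∑ j ∈ Finset.Icc 1 k, c j * x^(j+1) := by
        rw [← Finset.sum_sub_distrib]
        exact Finset.sum_congr rfl fun j _ => by ring
      have e2 : F x * ∑ j ∈ Finset.Icc 1 k, c j * (F x)^j
          = ∑ j ∈ Finset.Icc 1 k, c j * (F x)^(j+1) := by
        rw [Finset.mul_sum]
        exact Finset.sum_congr rfl fun j _ => by ring
      rw [e1, mul_add, mul_one, e2]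
      ring
    rwa [heq] at hterms
  -- conclude the polynomial part is o(x^(k+1))
  have hG : (fun x => (∑ j ∈ Finset.Icc 1 k, c j * x^(j+1)) + α/2 * x^(k+1))
      =o[nhds 0] fun x : ℝ => x^(k+1) := by
    have hsum := H1.add H2
    have heq : (fun x => (x - F x * (1 + ∑ j ∈ Finset.Icc 1 k, c j * (F x)^j))
          + (F x * (1 + ∑ j ∈ Finset.Icc 1 k, c j * (F x)^j)
            - (x + ((∑ j ∈ Finset.Icc 1 k, c j * x^(j+1)) + α/2 * x^(k+1)))))
        = fun x => -((∑ j ∈ Finset.Icc 1 k, c j * x^(j+1)) + α/2 * x^(k+1)) :=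
      funext fun x => by ring
    rw [heq] at hsum
    simpa using hsum.neg_left
  -- extract coefficients by strong induction
  have hcoef : ∀ j, 1 ≤ j → j ≤ k → c j + (if j = k then α/2 else 0) = 0 := by
    intro j
    induction j using Nat.strong_induction_on with
    | _ j IH =>
      intro hj1 hjk
      have hz : ∀ i, 1 ≤ i → i < j → c i = 0 := by
        intro i hi1 hij
        have h := IH i hij hi1 (le_trans (le_of_lt hij) hjk)
        rw [if_neg (by omega)] at h
        simpa using h
      have hident : ∀ x : ℝ, ((∑ i ∈ Finset.Icc 1 k, c i * x^(i+1)) + α/2 * x^(k+1))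
          - ((∑ i ∈ (Finset.Icc 1 k).filter (fun i => j < i), c i * x^(i+1))
            + (if j = k then 0 else α/2 * x^(k+1)))
          = (c j + (if j = k then α/2 else 0)) * x^(j+1) := by
        intro x
        have hjmem : j ∈ Finset.Icc 1 k := Finset.mem_Icc.2 ⟨hj1, hjk⟩
        rw [← Finset.add_sum_erase _ _ hjmem]
        have e3 : ∑ i ∈ (Finset.Icc 1 k).erase j, c i * x^(i+1)
            = ∑ i ∈ (Finset.Icc 1 k).filter (fun i => j < i), c i * x^(i+1) := by
          apply (Finset.sum_subset ?_ ?_).symm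
          · intro i hi
            rw [Finset.mem_filter] at hi
            exact Finset.mem_erase.2 ⟨by omega, hi.1⟩
          · intro i hi hni
            rw [Finset.mem_erase] at hi
            rw [Finset.mem_filter] at hni
            have hij : i < j := by
              rcases Nat.lt_or_ge i j with h' | h'
              · exact h'
              · exact absurd ⟨hi.2, by omega⟩ hni
            rw [hz i (Finset.mem_Icc.1 hi.2).1 hij, zero_mul]
        rw [e3]
        by_cases hcase : j = k
        · subst hcase
          simp only [eq_self_iff_true, if_true]
          ring
        · simp only [if_neg hcase]
          ring
      have hR : (fun x => (∑ i ∈ (Finset.Icc 1 k).filter (fun i => j < i), c i * x^(i+1))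
            + (if j = k then 0 else α/2 * x^(k+1)))
          =o[nhds 0] fun x : ℝ => x^(j+1) := by
        apply Asymptotics.IsLittleO.add
        · apply Asymptotics.IsLittleO.fun_sum
          intro i hi
          rw [Finset.mem_filter] at hi
          exact (isLittleO_pow_pow (by omega : j+1 < i+1)).const_mul_left (c i)
        · by_cases hcase : j = k
          · simp only [if_pos hcase]
            exact isLittleO_zero _ _
          · simp only [if_neg hcase]
            exact (isLittleO_pow_pow (by omega : j+1 < k+1)).const_mul_left (α/2)
      have hGj : (fun x => (∑ i ∈ Finset.Icc 1 k, c i * x^(i+1)) + α/2 * x^(k+1))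
          =o[nhds 0] fun x : ℝ => x^(j+1) :=
        hG.trans_isBigO (pow_O (by omega : j+1 ≤ k+1))
      have hdj : (fun x => (c j + (if j = k then α/2 else 0)) * x^(j+1))
          =o[nhds 0] fun x : ℝ => x^(j+1) := by
        have := hGj.sub hR
        have heq : (fun x => ((∑ i ∈ Finset.Icc 1 k, c i * x^(i+1)) + α/2 * x^(k+1))
              - ((∑ i ∈ (Finset.Icc 1 k).filter (fun i => j < i), c i * x^(i+1))
                + (if j = k then 0 else α/2 * x^(k+1))))
            = fun x => (c j + (if j = k then α/2 else 0)) * x^(j+1) :=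
          funext fun x => hident x
        rwa [heq] at this
      exact const_of_littleO hdj
  have hfin := hcoef k h1 le_rfl
  rw [if_pos rfl] at hfin
  -- final : evaluate the polynomial
  simp only [map_add, map_mul, MvPolynomial.eval_C, MvPolynomial.eval_X]
  have hck : c k = MvPolynomial.eval a (A k) := rfl
  rw [← hck, ← hα]
  linarith
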